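/- Let A be a finite set of strings and W a common subsequence of A. Then W is not a maximal common subsequence of A if and only if there exists k with 0 ≤ k ≤ |W| and a character c such that c occurs in Middle(A_l, W, k) for every string A_l in A; in that case the string W(0,k] ⊕ c ⊕ W(k,|W|] is also a common subsequence of A. -/

import Mathlib

open List

/-- Length of the shortest prefix of `A` containing `W` as a subsequence. -/
noncomputable def minPrefixLen {α : Type*} (A W : List α) : ℕ :=
  sInf {n | W <+ A.take n}

/-- Length of the shortest suffix of `A` containing `W` as a subsequence. -/
noncomputable def minSuffixLen {α : Type*} (A W : List α) : ℕ :=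
  sInf {n | W <+ A.drop (A.length - n)}

/-- `Middle A W k`: what remains of `A` after deleting the shortest prefix containing
`W.take k` as a subsequence and the shortest suffix containing `W.drop k`. -/
noncomputable def Middle {α : Type*} (A W : List α) (k : ℕ) : List α :=
  (A.take (A.length - minSuffixLen A (W.drop k))).drop (minPrefixLen A (W.take k))

/-- `W` is a common subsequence of all strings in `𝒜`. -/
def IsCommonSubseq {α : Type*} (𝒜 : Finset (List α)) (W : List α) : Prop :=
  ∀ A ∈ 𝒜, W <+ A

/-- `W` is a maximal common subsequence of `𝒜`: it is a common subsequence and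
inserting any single character at any position never yields a common subsequence. -/
def IsMCS {α : Type*} (𝒜 : Finset (List α)) (W : List α) : Prop :=
  IsCommonSubseq 𝒜 W ∧
    ∀ (c : α) (k : ℕ), k ≤ W.length →
      ¬ IsCommonSubseq 𝒜 (W.take k ++ c :: W.drop k)

lemma minPrefixLen_spec {α : Type*} {A W : List α} (h : W <+ A) :
    W <+ A.take (minPrefixLen A W) :=
  Nat.sInf_mem (⟨A.length, by simpa using h⟩ : Set.Nonempty {n | W <+ A.take n})

lemma minSuffixLen_spec {α : Type*} {A W : List α} (h : W <+ A) :
    W <+ A.drop (A.length - minSuffixLen A W) :=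
  Nat.sInf_mem (⟨A.length, by simpa using h⟩ : Set.Nonempty {n | W <+ A.drop (A.length - n)})

lemma greedyP {α : Type*} {A X Y : List α} (h : X ++ Y <+ A) :
    Y <+ A.drop (minPrefixLen A X) := by
  obtain ⟨r₁, r₂, rfl, h1, h2⟩ := List.append_sublist_iff.1 h
  have hp : minPrefixLen (r₁ ++ r₂) X ≤ r₁.length :=
    Nat.sInf_le (by simpa [List.take_left] using h1)
  have hdrop : (r₁ ++ r₂).drop (minPrefixLen (r₁ ++ r₂) X)
      = r₁.drop (minPrefixLen (r₁ ++ r₂) X) ++ r₂ :=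
    List.drop_append_of_le_length hp
  rw [hdrop]
  exact h2.trans (List.sublist_append_right _ _)

lemma greedyS {α : Type*} {A X Y : List α} (h : X ++ Y <+ A) :
    X <+ A.take (A.length - minSuffixLen A Y) := by
  obtain ⟨r₁, r₂, rfl, h1, h2⟩ := List.append_sublist_iff.1 h
  have hs : minSuffixLen (r₁ ++ r₂) Y ≤ r₂.length :=
    Nat.sInf_le (by simpa [List.length_append, List.drop_left] using h2)
  have hl : r₁.length ≤ (r₁ ++ r₂).length - minSuffixLen (r₁ ++ r₂) Y := by
    simp only [List.length_append]; omega
  rw [List.take_append, List.take_of_length_le hl]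
  exact h1.trans (List.sublist_append_left _ _)

lemma minPrefixLen_take {α : Type*} {A X : List α} {m : ℕ} (h : X <+ A.take m) :
    minPrefixLen (A.take m) X = minPrefixLen A X := by
  have hXA : X <+ A := h.trans (List.take_sublist m A)
  have hpm : minPrefixLen A X ≤ m := Nat.sInf_le h
  have hspec : X <+ A.take (minPrefixLen A X) := minPrefixLen_spec hXA
  apply Nat.le_antisymm
  · exact Nat.sInf_le (by simpa [List.take_take, min_eq_left hpm] using hspec)
  · have hmem : minPrefixLen (A.take m) X ∈ {n | X <+ (A.take m).take n} :=
      Nat.sInf_mem ⟨m, by simpa [List.take_take] using h⟩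
    have h2 : X <+ A.take (min (minPrefixLen (A.take m) X) m) := by
      rw [← List.take_take]; exact hmem
    exact (Nat.sInf_le h2).trans (min_le_left _ _)

lemma mem_middle_of_sublist {α : Type*} {A W : List α} {k : ℕ} {c : α}
    (h : W.take k ++ c :: W.drop k <+ A) : c ∈ Middle A W k := by
  have h' : (W.take k ++ [c]) ++ W.drop k <+ A := by simpa using h
  have hB : W.take k ++ [c] <+ A.take (A.length - minSuffixLen A (W.drop k)) := greedyS h'
  have hc : [c] <+ (A.take (A.length - minSuffixLen A (W.drop k))).drop
      (minPrefixLen (A.take (A.length - minSuffixLen A (W.drop k))) (W.take k)) := greedyP hB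
  rw [minPrefixLen_take ((List.sublist_append_left _ _).trans hB)] at hc
  exact List.singleton_sublist.1 hc

lemma sublist_of_mem_middle {α : Type*} {A W : List α} {k : ℕ} {c : α}
    (hWA : W <+ A) (hc : c ∈ Middle A W k) :
    W.take k ++ c :: W.drop k <+ A := by
  set p := minPrefixLen A (W.take k) with hp
  set m := A.length - minSuffixLen A (W.drop k) with hm
  have hT : W.take k <+ A.take p := minPrefixLen_spec ((List.take_sublist k W).trans hWA)
  have hD : W.drop k <+ A.drop m := minSuffixLen_spec ((List.drop_sublist k W).trans hWA)
  have hmid : c ∈ (A.take m).drop p := hc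
  have hplem : p ≤ m := by
    by_contra hgt
    push_neg at hgt
    have : (A.take m).length ≤ p := by
      have := List.length_take_le m A
      omega
    rw [List.drop_eq_nil_of_le this] at hmid
    exact absurd hmid List.not_mem_nil
  have key : A.take p ++ (A.take m).drop p ++ A.drop m = A := by
    have h1 : A.take p = (A.take m).take p := by
      rw [List.take_take, min_eq_left hplem]
    rw [h1, List.take_append_drop, List.take_append_drop]
  have hfin : (W.take k ++ [c]) ++ W.drop k <+ A.take p ++ (A.take m).drop p ++ A.drop m :=
    (hT.append (List.singleton_sublist.2 hmid)).append hD
  rw [key] at hfin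
  simpa using hfin

theorem stmt2 {α : Type*} (𝒜 : Finset (List α)) (W : List α)
    (hW : IsCommonSubseq 𝒜 W) :
    (¬ IsMCS 𝒜 W ↔
      ∃ k : ℕ, k ≤ W.length ∧ ∃ c : α, ∀ A ∈ 𝒜, c ∈ Middle A W k) ∧
    (∀ (k : ℕ) (c : α), k ≤ W.length → (∀ A ∈ 𝒜, c ∈ Middle A W k) →
      IsCommonSubseq 𝒜 (W.take k ++ c :: W.drop k)) := by
  have main : ∀ (k : ℕ) (c : α), k ≤ W.length → (∀ A ∈ 𝒜, c ∈ Middle A W k) →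
      IsCommonSubseq 𝒜 (W.take k ++ c :: W.drop k) := by
    intro k c _ h A hA
    exact sublist_of_mem_middle (hW A hA) (h A hA)
  refine ⟨⟨fun hn => ?_, fun ⟨k, hk, c, hc⟩ hm => ?_⟩, main⟩
  · rw [IsMCS, not_and_or] at hn
    rcases hn with h | h
    · exact absurd hW h
    · push_neg at h
      obtain ⟨c, k, hk, hcs⟩ := h
      exact ⟨k, hk, c, fun A hA => mem_middle_of_sublist (hcs A hA)⟩
  · exact hm.2 c k hk (main k c hk hc)
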